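/- Let S be a finite set with |S| = n ≥ 4. Then there exists a separating family F₀ of subsets of S (i.e., for all distinct a, b ∈ S there exists E ∈ F₀ with a ∈ E and b ∉ E) whose cardinality N satisfies N ≤ 2 + log₂ n + (1/2)·log₂ log₂ n ≤ 3·log₂ n. -/
import Mathlib

private lemma sixteen_pow_le : ∀ m : ℕ, 1 ≤ m → 16 ^ m ≤ 4 * m * (Nat.centralBinom m) ^ 2 := by
  intro m hm
  induction m with
  | zero => omega
  | succ k ih =>
    rcases Nat.eq_zero_or_pos k with hk | hk
    · subst hk; decide
    · have ihk := ih hk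
      have key := Nat.succ_mul_centralBinom_succ k
      refine Nat.le_of_mul_le_mul_left ?_ (show 0 < (k+1)^2 by positivity)
      calc (k+1)^2 * 16 ^ (k+1)
          = 16*(k+1)^2 * 16 ^ k := by ring
        _ ≤ 16*(k+1)^2 * (4 * k * (Nat.centralBinom k)^2) := by gcongr
        _ = (4*k*(k+1)) * (16 * (k+1) * (Nat.centralBinom k)^2) := by ring
        _ ≤ ((2*k+1)^2) * (16 * (k+1) * (Nat.centralBinom k)^2) := by
            have : 4*k*(k+1) ≤ (2*k+1)^2 := by nlinarith
            exact Nat.mul_le_mul_right _ this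
        _ = 4*(k+1) * (2 * (2*k+1) * Nat.centralBinom k)^2 := by ring
        _ = 4*(k+1) * ((k+1) * Nat.centralBinom (k+1))^2 := by rw [key]
        _ = (k+1)^2 * (4 * (k+1) * (Nat.centralBinom (k+1))^2) := by ring

private lemma four_pow_even (m : ℕ) (hm : 1 ≤ m) :
    4 ^ (2*m) ≤ (2*(2*m)) * ((2*m).choose m) ^ 2 := by
  have h := sixteen_pow_le m hm
  have e : (16:ℕ)^m = 4^(2*m) := by rw [pow_mul]; norm_num
  have ecb : Nat.centralBinom m = (2*m).choose m := rfl
  rw [e, ecb] at h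
  calc 4^(2*m) ≤ 4*m * ((2*m).choose m)^2 := h
    _ = (2*(2*m)) * ((2*m).choose m)^2 := by ring

private lemma four_pow_odd (m : ℕ) (hm : 1 ≤ m) :
    4 ^ (2*m+1) ≤ (2*(2*m+1)+2) * ((2*m+1).choose m) ^ 2 := by
  have h := sixteen_pow_le m hm
  have key : (2*m+1) * Nat.centralBinom m = ((2*m+1).choose m) * (m+1) := by
    have h1 := Nat.add_one_mul_choose_eq (2*m) m
    have h2 : (2*m+1).choose (m+1) = (2*m+1).choose m := by
      rw [← Nat.choose_symm (by omega : m+1 ≤ 2*m+1)]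
      congr 1
      omega
    have : (2*m).succ * (2*m).choose m = (2*m+1).choose (m+1) * (m+1) := h1
    rw [h2] at this
    simpa [Nat.centralBinom, Nat.succ_eq_add_one] using this
  refine Nat.le_of_mul_le_mul_left ?_ (show 0 < (m+1)^2 by positivity)
  calc (m+1)^2 * 4 ^ (2*m+1)
      = 4*(m+1)^2 * 16^m := by
        have e4 : (4:ℕ)^(2*m+1) = 4*16^m := by
          rw [pow_succ, pow_mul]; norm_num; ring
        rw [e4]; ring
    _ ≤ 4*(m+1)^2 * (4 * m * (Nat.centralBinom m)^2) := by gcongr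
    _ = (4*m*(m+1)) * (4 * (m+1) * (Nat.centralBinom m)^2) := by ring
    _ ≤ ((2*m+1)^2) * (4 * (m+1) * (Nat.centralBinom m)^2) := by
        have : 4*m*(m+1) ≤ (2*m+1)^2 := by nlinarith
        exact Nat.mul_le_mul_right _ this
    _ = 4*(m+1) * ((2*m+1) * Nat.centralBinom m)^2 := by ring
    _ = 4*(m+1) * (((2*m+1).choose m) * (m+1))^2 := by rw [key]
    _ = (m+1)^2 * ((2*(2*m+1)+2) * ((2*m+1).choose m)^2) := by ring

private lemma sep_family {α : Type*} [Fintype α] [DecidableEq α] (N : ℕ)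
    (h : Fintype.card α ≤ N.choose (N/2)) :
    ∃ F₀ : Finset (Finset α), (∀ a b : α, a ≠ b → ∃ E ∈ F₀, a ∈ E ∧ b ∉ E) ∧ F₀.card ≤ N := by
  have h2 : Fintype.card α ≤ Fintype.card {s : Finset (Fin N) // s.card = N/2} := by
    rw [Fintype.card_finset_len]
    simpa using h
  obtain ⟨f⟩ := Function.Embedding.nonempty_of_card_le h2
  refine ⟨Finset.image (fun i => Finset.univ.filter fun a => i ∈ (f a).1) Finset.univ, ?_, ?_⟩
  · intro a b hab
    have hne : (f a).1 ≠ (f b).1 := fun he => hab (f.injective (Subtype.ext he))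
    have hns : ¬ (f a).1 ⊆ (f b).1 := fun hs =>
      hne (Finset.eq_of_subset_of_card_le hs (by rw [(f a).2, (f b).2]))
    obtain ⟨i, hia, hib⟩ := Finset.not_subset.mp hns
    exact ⟨_, Finset.mem_image_of_mem _ (Finset.mem_univ i), by simpa using hia,
      by simpa using hib⟩
  · exact (Finset.card_image_le).trans (by simp)

private lemma logb_le_two_mul {y : ℝ} (hy : 1 ≤ y) : Real.logb 2 y ≤ 2*(y-1) := by
  have h1 : Real.log y ≤ y - 1 := Real.log_le_sub_one_of_pos (by linarith)
  have h2 : (0.6931471803:ℝ) < Real.log 2 := Real.log_two_gt_d9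
  rw [Real.logb, div_le_iff₀ (by linarith)]
  nlinarith

private lemma logb_le_sub_one {t : ℝ} (ht : 2 ≤ t) : Real.logb 2 t ≤ t - 1 := by
  have e : Real.logb 2 t = 1 + Real.logb 2 (t/2) := by
    rw [Real.logb_div (by linarith) (by norm_num),
      Real.logb_self_eq_one (by norm_num : (1:ℝ) < 2)]
    ring
  have h := logb_le_two_mul (show (1:ℝ) ≤ t/2 by linarith)
  rw [e]; linarith

private lemma logb_le_half {t : ℝ} (ht : 4 ≤ t) : Real.logb 2 t ≤ t/2 := by
  have h4 : Real.logb 2 4 = 2 := by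
    rw [show (4:ℝ) = 2^(2:ℕ) by norm_num, Real.logb_pow,
      Real.logb_self_eq_one (by norm_num : (1:ℝ) < 2)]
    norm_num
  have e : Real.logb 2 t = 2 + Real.logb 2 (t/4) := by
    rw [Real.logb_div (by linarith) (by norm_num), h4]; ring
  have h := logb_le_two_mul (show (1:ℝ) ≤ t/4 by linarith)
  rw [e]; linarith

private lemma logb_ge {p q : ℕ} {x : ℝ} (hx : 0 < x) (hq : 0 < q) (h : (2:ℝ)^p ≤ x^q) :
    (p:ℝ)/q ≤ Real.logb 2 x := by
  rw [Real.le_logb_iff_rpow_le (by norm_num) hx]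
  have hqR : ((q:ℝ)) ≠ 0 := by positivity
  have hpow : ((2:ℝ)^((p:ℝ)/q))^(q:ℕ) = (2:ℝ)^p := by
    rw [← Real.rpow_natCast ((2:ℝ)^((p:ℝ)/q)) q, ← Real.rpow_mul (by norm_num),
      div_mul_cancel₀ _ hqR, Real.rpow_natCast]
  refine le_of_pow_le_pow_left₀ (n := q) (by omega) hx.le ?_
  rw [hpow]; exact h

/-- **Small separating families.** If `|S| = n ≥ 4`, there exists a separating family
`F₀` of subsets of `S` (for all distinct `a, b` some `E ∈ F₀` has `a ∈ E`, `b ∉ E`)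
whose cardinality `N` satisfies `N ≤ 2 + log₂ n + (1/2)·log₂ log₂ n ≤ 3·log₂ n`. -/
theorem exists_small_separating_family {α : Type*} [Fintype α] [DecidableEq α] (n : ℕ)
    (hn : 4 ≤ n) (hcard : Fintype.card α = n) :
    ∃ F₀ : Finset (Finset α),
      (∀ a b : α, a ≠ b → ∃ E ∈ F₀, a ∈ E ∧ b ∉ E) ∧
      (F₀.card : ℝ) ≤ 2 + Real.logb 2 n + (1 / 2) * Real.logb 2 (Real.logb 2 n) ∧
      2 + Real.logb 2 n + (1 / 2) * Real.logb 2 (Real.logb 2 n) ≤ 3 * Real.logb 2 n := by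
  have hn0 : (0:ℝ) < n := by
    have : (4:ℝ) ≤ n := by exact_mod_cast hn
    linarith
  set L := Real.logb 2 (n:ℝ) with hLdef
  have h4 : Real.logb 2 (4:ℝ) = 2 := by
    rw [show (4:ℝ) = 2^(2:ℕ) by norm_num, Real.logb_pow,
      Real.logb_self_eq_one (by norm_num : (1:ℝ) < 2)]
    norm_num
  have hL2 : (2:ℝ) ≤ L := by
    rw [← h4]
    exact Real.logb_le_logb_of_le (by norm_num) (by norm_num) (by exact_mod_cast hn)
  have hLpos : (0:ℝ) < L := by linarith
  have hlogL1 : (1:ℝ) ≤ Real.logb 2 L := by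
    rw [← Real.logb_self_eq_one (by norm_num : (1:ℝ) < 2)]
    exact Real.logb_le_logb_of_le (by norm_num) (by norm_num) hL2
  have hthird : 2 + L + (1/2) * Real.logb 2 L ≤ 3 * L := by
    have := logb_le_sub_one hL2
    linarith
  -- it suffices to find N with n ≤ choose N (N/2) and N ≤ B
  have main : ∀ N : ℕ, n ≤ N.choose (N/2) →
      (N:ℝ) ≤ 2 + L + (1/2) * Real.logb 2 L →
      ∃ F₀ : Finset (Finset α),
        (∀ a b : α, a ≠ b → ∃ E ∈ F₀, a ∈ E ∧ b ∉ E) ∧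
        (F₀.card : ℝ) ≤ 2 + Real.logb 2 n + (1 / 2) * Real.logb 2 (Real.logb 2 n) ∧
        2 + Real.logb 2 n + (1 / 2) * Real.logb 2 (Real.logb 2 n) ≤ 3 * Real.logb 2 n := by
    intro N hch hNB
    obtain ⟨F₀, hsep, hcardF⟩ := sep_family (α := α) N (by rw [hcard]; exact hch)
    refine ⟨F₀, hsep, ?_, hthird⟩
    have : (F₀.card : ℝ) ≤ (N:ℝ) := by exact_mod_cast hcardF
    linarith
  rcases le_or_gt n 6 with h6 | h6
  · exact main 4 (h6.trans (by decide)) (by push_cast; linarith)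
  rcases le_or_gt n 10 with h10 | h10
  · -- n between 7 and 10 : use N = 5, show 5 ≤ B
    have ha : (14:ℝ)/5 ≤ L := by
      apply logb_ge hn0 (by norm_num)
      have h7 : (7:ℝ) ≤ n := by exact_mod_cast h6
      calc (2:ℝ)^(14:ℕ) ≤ (7:ℝ)^(5:ℕ) := by norm_num
        _ ≤ (n:ℝ)^(5:ℕ) := by gcongr
    have hb : (7:ℝ)/5 ≤ Real.logb 2 L := by
      have h1 : (7:ℝ)/5 ≤ Real.logb 2 ((14:ℝ)/5) := by
        apply logb_ge (by norm_num) (by norm_num)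
        norm_num
      exact h1.trans (Real.logb_le_logb_of_le (by norm_num) (by norm_num) ha)
    exact main 5 (h10.trans (by decide)) (by push_cast; linarith)
  · -- general case : n ≥ 11, N = floor B
    set B := 2 + L + (1/2) * Real.logb 2 L with hBdef
    have hBpos : (0:ℝ) ≤ B := by rw [hBdef]; linarith
    set N := ⌊B⌋₊ with hNdef
    have hNB : (N:ℝ) ≤ B := Nat.floor_le hBpos
    have hBN : B - 1 < (N:ℝ) := Nat.sub_one_lt_floor B
    have hn11 : (11:ℝ) ≤ n := by exact_mod_cast h10
    have hL17 : (17:ℝ)/5 ≤ L := by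
      apply logb_ge hn0 (by norm_num)
      calc (2:ℝ)^(17:ℕ) ≤ (11:ℝ)^(5:ℕ) := by norm_num
        _ ≤ (n:ℝ)^(5:ℕ) := by gcongr
    have hlogL65 : (6:ℝ)/5 ≤ Real.logb 2 L := by
      have h1 : (6:ℝ)/5 ≤ Real.logb 2 ((17:ℝ)/5) := by
        apply logb_ge (by norm_num) (by norm_num)
        norm_num
      exact h1.trans (Real.logb_le_logb_of_le (by norm_num) (by norm_num) hL17)
    have hN6 : 6 ≤ N := by
      apply Nat.le_floor
      push_cast
      rw [hBdef] at *
      linarith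
    have hN6R : (6:ℝ) ≤ (N:ℝ) := by exact_mod_cast hN6
    -- the key exponential identity
    have hnL : (2:ℝ)^L = n := Real.rpow_logb (by norm_num) (by norm_num) hn0
    have h2L : (2:ℝ)^(2*L) = (n:ℝ)^2 := by
      rw [two_mul, Real.rpow_add (by norm_num), hnL]
      ring
    have hlogLr : (2:ℝ)^(Real.logb 2 L) = L := Real.rpow_logb (by norm_num) (by norm_num) hLpos
    have e1 : (2:ℝ) ^ ((2:ℝ) + 2*L + Real.logb 2 L) = 4*(n:ℝ)^2*L := by
      rw [Real.rpow_add (by norm_num), Real.rpow_add (by norm_num), h2L, hlogLr]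
      norm_num
    have e2 : (4:ℝ)^(N:ℕ) = (2:ℝ)^((2*N:ℕ):ℝ) := by
      rw [Real.rpow_natCast, pow_mul]
      norm_num
    have hexp : ((2:ℝ) + 2*L + Real.logb 2 L) ≤ ((2*N:ℕ):ℝ) := by
      push_cast
      rw [hBdef] at hBN
      linarith
    have hmono : (2:ℝ) ^ ((2:ℝ) + 2*L + Real.logb 2 L) ≤ (4:ℝ)^(N:ℕ) := by
      rw [e2]
      exact Real.rpow_le_rpow_of_exponent_le (by norm_num) hexp
    -- now the parity split to get n ≤ choose N (N/2)
    have hch : n ≤ N.choose (N/2) := by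
      rcases Nat.even_or_odd N with he | ho
      · obtain ⟨m, hm⟩ := he
        have hmN : N = 2*m := by omega
        have hm3 : 1 ≤ m := by omega
        -- show (N:ℝ) ≤ 2*L
        have hN2L : (N:ℝ) ≤ 2*L := by
          by_contra hcon
          push_neg at hcon
          set t : ℝ := (N:ℝ)/2 with htdef
          have ht3 : (3:ℝ) ≤ t := by rw [htdef]; linarith
          have hLt : L < t := by rw [htdef]; linarith
          have hlt : Real.logb 2 L ≤ t - 1 :=
            (Real.logb_le_logb_of_le (by norm_num) hLpos hLt.le).trans
              (logb_le_sub_one (by linarith))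
          have : B < (N:ℝ) := by
            rw [hBdef]
            have : (N:ℝ) = 2*t := by rw [htdef]; ring
            rw [this]
            linarith
          linarith
        have hreal : (n:ℝ)^2 * (2*N) ≤ (4:ℝ)^(N:ℕ) := by
          calc (n:ℝ)^2 * (2*N) ≤ (n:ℝ)^2 * (4*L) := by
                have hn2 : (0:ℝ) ≤ (n:ℝ)^2 := by positivity
                nlinarith
            _ = 4*(n:ℝ)^2*L := by ring
            _ = (2:ℝ) ^ ((2:ℝ) + 2*L + Real.logb 2 L) := e1.symm
            _ ≤ (4:ℝ)^(N:ℕ) := hmono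
        have hnat : n^2 * (2*N) ≤ 4^N := by exact_mod_cast hreal
        have hfe : 4^N ≤ (2*N) * (N.choose (N/2))^2 := by
          have := four_pow_even m hm3
          rw [hmN]
          simpa [Nat.mul_div_cancel_left] using this
        have hsq : n^2 ≤ (N.choose (N/2))^2 := by
          have h2N : 0 < 2*N := by omega
          have : (2*N) * n^2 ≤ (2*N) * (N.choose (N/2))^2 := by
            calc (2*N) * n^2 = n^2 * (2*N) := by ring
              _ ≤ 4^N := hnat
              _ ≤ (2*N) * (N.choose (N/2))^2 := hfe
          exact Nat.le_of_mul_le_mul_left this h2N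
        exact le_of_pow_le_pow_left₀ (by norm_num) (Nat.zero_le _) hsq
      · obtain ⟨m, hm⟩ := ho
        have hm3 : 1 ≤ m := by omega
        have hN2L : (N:ℝ) + 1 ≤ 2*L := by
          by_contra hcon
          push_neg at hcon
          set t : ℝ := ((N:ℝ)+1)/2 with htdef
          have ht4 : (4:ℝ) ≤ t := by
            rw [htdef]
            have : (7:ℕ) ≤ N := by omega
            have : (7:ℝ) ≤ (N:ℝ) := by exact_mod_cast this
            linarith
          have hLt : L < t := by rw [htdef]; linarith
          have hlt : Real.logb 2 L ≤ t/2 :=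
            (Real.logb_le_logb_of_le (by norm_num) hLpos hLt.le).trans
              (logb_le_half (by linarith))
          have : B < (N:ℝ) := by
            rw [hBdef]
            have hNt : (N:ℝ) = 2*t - 1 := by rw [htdef]; ring
            rw [hNt]
            linarith
          linarith
        have hreal : (n:ℝ)^2 * (2*N+2) ≤ (4:ℝ)^(N:ℕ) := by
          calc (n:ℝ)^2 * (2*N+2) ≤ (n:ℝ)^2 * (4*L) := by
                have hn2 : (0:ℝ) ≤ (n:ℝ)^2 := by positivity
                nlinarith
            _ = 4*(n:ℝ)^2*L := by ring
            _ = (2:ℝ) ^ ((2:ℝ) + 2*L + Real.logb 2 L) := e1.symm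
            _ ≤ (4:ℝ)^(N:ℕ) := hmono
        have hnat : n^2 * (2*N+2) ≤ 4^N := by exact_mod_cast hreal
        have hfo : 4^N ≤ (2*N+2) * (N.choose (N/2))^2 := by
          have := four_pow_odd m hm3
          rw [hm]
          have hdiv : (2*m+1)/2 = m := by omega
          rw [hdiv]
          exact this
        have hsq : n^2 ≤ (N.choose (N/2))^2 := by
          have h2N : 0 < 2*N+2 := by omega
          have : (2*N+2) * n^2 ≤ (2*N+2) * (N.choose (N/2))^2 := by
            calc (2*N+2) * n^2 = n^2 * (2*N+2) := by ring
              _ ≤ 4^N := hnat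
              _ ≤ (2*N+2) * (N.choose (N/2))^2 := hfo
          exact Nat.le_of_mul_le_mul_left this h2N
        exact le_of_pow_le_pow_left₀ (by norm_num) (Nat.zero_le _) hsq
    exact main N hch hNB
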